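/- Let Γ be a finitely generated group. Then the following two statements are equivalent: (i) for every normal subgroup N of Γ such that the quotient Γ/N contains a finitely generated abelian subgroup of finite index, the quotient Γ/N is virtually cyclic (i.e., Γ/N contains a cyclic subgroup of finite index); (ii) for every subgroup Γ₀ ⊆ Γ of finite index, the torsion-free rank of the abelianization Γ₀/[Γ₀, Γ₀] is at most 1. -/

import Mathlib

open scoped TensorProduct DirectSum

section Aux

private lemma baseChange_surj {M N : Type u} [AddCommGroup M] [AddCommGroup N]
    (f : M →ₗ[ℤ] N) (hf : Function.Surjective f) :
    Function.Surjective (LinearMap.baseChange ℚ f) := by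
  intro z
  induction z using TensorProduct.induction_on with
  | zero => exact ⟨0, map_zero _⟩
  | tmul q n =>
    obtain ⟨m, rfl⟩ := hf n
    exact ⟨q ⊗ₜ m, rfl⟩
  | add x y hx hy =>
    obtain ⟨a, rfl⟩ := hx
    obtain ⟨b, rfl⟩ := hy
    exact ⟨a + b, map_add _ _ _⟩

private lemma rank_le_of_add_surj {M N : Type u} [AddCommGroup M] [AddCommGroup N]
    (f : M →+ N) (hf : Function.Surjective f) :
    Module.rank ℚ (ℚ ⊗[ℤ] N) ≤ Module.rank ℚ (ℚ ⊗[ℤ] M) :=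
  LinearMap.rank_le_of_surjective _ (baseChange_surj f.toIntLinearMap hf)

private lemma rank_le_of_mul_surj {A B : Type u} [CommGroup A] [CommGroup B]
    (f : A →* B) (hf : Function.Surjective f) :
    Module.rank ℚ (ℚ ⊗[ℤ] Additive B) ≤ Module.rank ℚ (ℚ ⊗[ℤ] Additive A) :=
  rank_le_of_add_surj (MonoidHom.toAdditive f) hf

private lemma rank_eq_of_mulEquiv {A B : Type u} [CommGroup A] [CommGroup B] (e : A ≃* B) :
    Module.rank ℚ (ℚ ⊗[ℤ] Additive A) = Module.rank ℚ (ℚ ⊗[ℤ] Additive B) :=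
  le_antisymm (rank_le_of_mul_surj e.symm.toMonoidHom e.symm.surjective)
    (rank_le_of_mul_surj e.toMonoidHom e.surjective)

/-- If a commutative group has a cyclic subgroup of finite index, then its rational
rank is at most one. -/
private lemma rank_le_one_of_cyclic {A : Type*} [CommGroup A]
    (D : Subgroup A) (hD : IsCyclic ↥D) (hDi : D.FiniteIndex) :
    Module.rank ℚ (ℚ ⊗[ℤ] Additive A) ≤ 1 := by
  obtain ⟨g, hg⟩ := hD.exists_zpow_surjective
  haveI : D.Normal := ⟨fun x hx gg => by simpa [mul_comm, mul_assoc] using hx⟩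
  set v : ℚ ⊗[ℤ] Additive A := (1:ℚ) ⊗ₜ Additive.ofMul (g.1) with hv
  have hn : ((D.index : ℚ)) ≠ 0 := Nat.cast_ne_zero.mpr hDi.index_ne_zero
  have hspan : (⊤ : Submodule ℚ (ℚ ⊗[ℤ] Additive A)) ≤ Submodule.span ℚ {v} := by
    rintro z -
    induction z using TensorProduct.induction_on with
    | zero => exact Submodule.zero_mem _
    | add x y hx hy => exact Submodule.add_mem _ hx hy
    | tmul q a =>
      have hmem : (Additive.toMul a) ^ D.index ∈ D := D.pow_index_mem _
      obtain ⟨k, hk⟩ := hg ⟨_, hmem⟩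
      have hk' : (g.1 : A) ^ k = (Additive.toMul a) ^ D.index := congrArg Subtype.val hk
      have h2 : ((D.index : ℤ)) • a = k • Additive.ofMul g.1 := by
        apply Additive.toMul.injective
        rw [toMul_zsmul, toMul_zsmul]
        simpa [zpow_natCast] using hk'.symm
      have h3 : ((D.index : ℤ)) • ((1:ℚ) ⊗ₜ[ℤ] a) = k • v := by
        rw [← TensorProduct.tmul_smul, h2, TensorProduct.tmul_smul]
      have h4 : (1:ℚ) ⊗ₜ[ℤ] a = ((k:ℚ)/(D.index:ℚ)) • v := by
        have h5 := congrArg (fun w => ((D.index:ℚ))⁻¹ • w) h3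
        simp only [← Int.cast_smul_eq_zsmul ℚ, Int.cast_natCast] at h5
        rw [inv_smul_smul₀ hn] at h5
        rw [h5, smul_smul, div_eq_inv_mul]
      have h6 : q ⊗ₜ[ℤ] a = (q * ((k:ℚ)/(D.index:ℚ))) • v := by
        have : q ⊗ₜ[ℤ] a = q • ((1:ℚ) ⊗ₜ[ℤ] a) := by
          rw [TensorProduct.smul_tmul', smul_eq_mul, mul_one]
        rw [this, h4, smul_smul]
      rw [h6]
      exact Submodule.smul_mem _ _ (Submodule.mem_span_singleton_self v)
  have htop : Submodule.span ℚ {v} = ⊤ := top_unique hspan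
  calc Module.rank ℚ (ℚ ⊗[ℤ] Additive A)
      = Module.rank ℚ ↥(⊤ : Submodule ℚ (ℚ ⊗[ℤ] Additive A)) := (rank_top ℚ _).symm
    _ = Module.rank ℚ ↥(Submodule.span ℚ {v}) := by rw [htop]
    _ ≤ 1 := by simpa using rank_span_le (R := ℚ) {v}


/-- If a commutative group embeds into a group having a cyclic subgroup of finite
index, then its rational rank is at most one. -/
private lemma rank_le_one_of_inj {A Q : Type*} [CommGroup A] [Group Q]
    (j : A →* Q) (hj : Function.Injective j)
    (C : Subgroup Q) (hC : IsCyclic ↥C) (hCi : C.FiniteIndex) :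
    Module.rank ℚ (ℚ ⊗[ℤ] Additive A) ≤ 1 := by
  set D := C.comap j with hD
  have hDi : D.FiniteIndex := by
    constructor
    rw [hD, Subgroup.index_comap]
    show (C.subgroupOf j.range).index ≠ 0
    exact Subgroup.FiniteIndex.index_ne_zero
  have hDc : IsCyclic ↥D := by
    haveI := hC
    let φ : ↥D →* ↥C := (j.comp D.subtype).codRestrict C (fun x => x.2)
    have hφ : Function.Injective φ := by
      intro x y hxy
      have : j x.1 = j y.1 := congrArg Subtype.val hxy
      exact Subtype.ext (hj this)
    exact isCyclic_of_surjective _ (MonoidHom.ofInjective hφ).symm.surjective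
  exact rank_le_one_of_cyclic D hDc hDi

/-- A finitely generated additive commutative group of rational rank at most one
has a cyclic subgroup of finite index. -/
private lemma exists_addCyclic {M : Type} [AddCommGroup M] (hM : AddGroup.FG M)
    (hr : Module.rank ℚ (ℚ ⊗[ℤ] M) ≤ 1) :
    ∃ D : AddSubgroup M, IsAddCyclic ↥D ∧ D.FiniteIndex := by
  obtain ⟨n, ι, fι, p, hp, e, ⟨f⟩⟩ := AddCommGroup.equiv_free_prod_directSum_zmod M
  haveI := fι
  haveI : ∀ i, NeZero (p i ^ e i) := fun i => ⟨pow_ne_zero _ (hp i).pos.ne'⟩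
  haveI : Finite (⨁ i, ZMod (p i ^ e i)) :=
    Finite.of_equiv _ (DFinsupp.equivFunOnFintype (ι := ι)).symm
  have hproj : Function.Surjective
      ((AddMonoidHom.fst (Fin n →₀ ℤ) (⨁ i, ZMod (p i ^ e i))).comp f.toAddMonoidHom) :=
    Prod.fst_surjective.comp f.surjective
  have hn : n ≤ 1 := by
    have h1 : Module.rank ℚ (ℚ ⊗[ℤ] (Fin n →₀ ℤ)) ≤ Module.rank ℚ (ℚ ⊗[ℤ] M) :=
      rank_le_of_add_surj _ hproj
    have h2 : Module.rank ℚ (ℚ ⊗[ℤ] (Fin n →₀ ℤ)) = n := by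
      rw [rank_eq_card_basis ((Finsupp.basisSingleOne (ι := Fin n) (R := ℤ)).baseChange ℚ),
        Fintype.card_fin]
    have h3 : (n : Cardinal) ≤ 1 := h2 ▸ h1.trans hr
    exact_mod_cast h3
  obtain hn0 | hn1 : n = 0 ∨ n = 1 := by omega
  · subst hn0
    haveI : Finite (Fin 0 →₀ ℤ) := Finite.of_equiv _ Finsupp.equivFunOnFinite.symm
    haveI : Finite M := Finite.of_equiv _ f.toEquiv.symm
    exact ⟨⊥, ⟨⟨0, fun x => ⟨0, Subsingleton.elim _ _⟩⟩⟩, inferInstance⟩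
  · subst hn1
    set m : M := f.symm (Finsupp.single 0 1, 0) with hm
    refine ⟨AddSubgroup.zmultiples m, ?_, ?_⟩
    · refine ⟨⟨⟨m, AddSubgroup.mem_zmultiples m⟩, fun x => ?_⟩⟩
      obtain ⟨k, hk⟩ := AddSubgroup.mem_zmultiples_iff.mp x.2
      exact ⟨k, Subtype.ext (by simpa using hk)⟩
    · have hsurj : Function.Surjective (fun t : (⨁ i, ZMod (p i ^ e i)) =>
          (QuotientAddGroup.mk (f.symm (0, t)) : M ⧸ AddSubgroup.zmultiples m)) := by
        intro x
        obtain ⟨y, rfl⟩ := QuotientAddGroup.mk_surjective x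
        refine ⟨(f y).2, ?_⟩
        show QuotientAddGroup.mk _ = _
        rw [QuotientAddGroup.eq]
        refine AddSubgroup.mem_zmultiples_iff.mpr ⟨(f y).1 0, ?_⟩
        have hfst : ((f y).1 0) • (Finsupp.single 0 1 : Fin 1 →₀ ℤ) = (f y).1 := by
          ext
          simp [Subsingleton.elim (default : Fin 1) 0]
        have h1 : ((f y).1 0) • m = f.symm ((f y).1, 0) := by
          rw [hm, ← map_zsmul, Prod.smul_mk, smul_zero, hfst]
        have h2 : -f.symm ((0 : Fin 1 →₀ ℤ), (f y).2) + y = f.symm ((f y).1, 0) := by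
          conv_lhs => rw [← f.symm_apply_apply y]
          rw [← map_neg, ← map_add]
          congr 1
          rw [Prod.ext_iff]
          constructor
          · simp
          · simp
        rw [h1, h2]
      haveI : Finite (M ⧸ AddSubgroup.zmultiples m) := Finite.of_surjective _ hsurj
      exact AddSubgroup.finiteIndex_of_finite_quotient

private def quotCongr {A : Type*} [Group A] (D' : AddSubgroup (Additive A)) :
    (A ⧸ AddSubgroup.toSubgroup' D') ≃ (Additive A ⧸ D') :=
  Quotient.congr (Equiv.refl _) (fun a b => by
    rw [QuotientGroup.leftRel_apply, QuotientAddGroup.leftRel_apply]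
    rfl)

private lemma exists_cyclic {A : Type} [CommGroup A] (hA : Group.FG A)
    (hr : Module.rank ℚ (ℚ ⊗[ℤ] Additive A) ≤ 1) :
    ∃ D : Subgroup A, IsCyclic ↥D ∧ D.FiniteIndex := by
  obtain ⟨D', h1, h2⟩ := exists_addCyclic (GroupFG.iff_add_fg.mp hA) hr
  refine ⟨AddSubgroup.toSubgroup' D', ?_, ?_⟩
  · obtain ⟨g, hg⟩ := h1
    refine ⟨⟨(Additive.toMul g.1 : A), g.2⟩, fun x => ?_⟩
    obtain ⟨k, hk⟩ := hg ⟨Additive.ofMul x.1, x.2⟩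
    refine ⟨k, Subtype.ext ?_⟩
    have hk1 : k • g.1 = Additive.ofMul x.1 := congrArg Subtype.val hk
    show (Additive.toMul g.1 : A) ^ k = x.1
    rw [← toMul_zsmul, hk1]
    rfl
  · constructor
    show Nat.card _ ≠ 0
    rw [Nat.card_congr (quotCongr D')]
    exact h2.index_ne_zero

section Transfer
open Subgroup MulAction

private lemma transfer_map_eq_pow {G : Type*} [Group G] (H : Subgroup G) [H.FiniteIndex]
    (g : G) :
    Abelianization.map H.subtype (MonoidHom.transfer (Abelianization.of (G := ↥H)) g)
      = Abelianization.of g ^ H.index := by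
  classical
  letI := H.fintypeQuotientOfFiniteIndex
  have hconj : ∀ (x y : G), Abelianization.of (y⁻¹ * x * y) = Abelianization.of x := by
    intro x y
    rw [map_mul, map_mul, map_inv, mul_comm ((Abelianization.of y)⁻¹) (Abelianization.of x),
      mul_assoc, inv_mul_cancel, mul_one]
  rw [MonoidHom.transfer_eq_prod_quotient_orbitRel_zpowers_quot, map_prod]
  have step : ∀ q : Quotient (orbitRel (zpowers g) (G ⧸ H)),
      Abelianization.map H.subtype
        (Abelianization.of (⟨q.out.out⁻¹ * g ^ Function.minimalPeriod (g • ·) q.out * q.out.out,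
          QuotientGroup.out_conj_pow_minimalPeriod_mem H g q.out⟩ : ↥H))
        = Abelianization.of g ^ Function.minimalPeriod (g • ·) q.out := by
    intro q
    rw [Abelianization.map_of]
    show Abelianization.of (q.out.out⁻¹ * g ^ _ * q.out.out) = _
    rw [hconj, map_pow]
  rw [Finset.prod_congr rfl (fun q _ => step q), Finset.prod_pow_eq_pow_sum]
  congr 1
  simp only [minimalPeriod_eq_card, Subgroup.index_eq_card, Nat.card_eq_fintype_card,
    Fintype.card_congr (selfEquivSigmaOrbits (zpowers g) (G ⧸ H)), Fintype.card_sigma]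
  rfl

private lemma rank_ab_le_of_finiteIndex {G : Type*} [Group G]
    (H : Subgroup G) [H.FiniteIndex] :
    Module.rank ℚ (ℚ ⊗[ℤ] Additive (Abelianization G)) ≤
      Module.rank ℚ (ℚ ⊗[ℤ] Additive (Abelianization ↥H)) := by
  set T : Abelianization G →* Abelianization ↥H :=
    Abelianization.lift (MonoidHom.transfer (Abelianization.of (G := ↥H))) with hT
  set ι : Abelianization ↥H →* Abelianization G := Abelianization.map H.subtype with hι
  have hofsurj : Function.Surjective (Abelianization.of (G := G)) :=
    fun b => QuotientGroup.induction_on b fun z => ⟨z, rfl⟩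
  have hcomp : ∀ x : Abelianization G, ι (T x) = x ^ H.index := by
    intro x
    obtain ⟨g, rfl⟩ := hofsurj x
    rw [hT, Abelianization.lift_apply_of]
    exact transfer_map_eq_pow H g
  set f1 := (MonoidHom.toAdditive T).toIntLinearMap with hf1
  set f2 := (MonoidHom.toAdditive ι).toIntLinearMap with hf2
  have hn : (H.index : ℚ) ≠ 0 := Nat.cast_ne_zero.mpr Subgroup.FiniteIndex.index_ne_zero
  have hcomp2 : ∀ z : ℚ ⊗[ℤ] Additive (Abelianization G),
      LinearMap.baseChange ℚ f2 (LinearMap.baseChange ℚ f1 z) = (H.index : ℚ) • z := by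
    intro z
    induction z using TensorProduct.induction_on with
    | zero => simp
    | add x y hx hy => rw [map_add, map_add, hx, hy, smul_add]
    | tmul q a =>
      rw [LinearMap.baseChange_tmul, LinearMap.baseChange_tmul]
      have key : f2 (f1 a) = (H.index : ℤ) • a := by
        apply Additive.toMul.injective
        rw [toMul_zsmul]
        show ι (T (Additive.toMul a)) = Additive.toMul a ^ (H.index : ℤ)
        rw [hcomp, zpow_natCast]
      rw [key, TensorProduct.tmul_smul, ← Int.cast_smul_eq_zsmul ℚ, Int.cast_natCast]
  have hinj : Function.Injective (LinearMap.baseChange ℚ f1) := by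
    intro x y hxy
    have h := congrArg (LinearMap.baseChange ℚ f2) hxy
    rw [hcomp2, hcomp2] at h
    exact smul_right_injective _ hn h
  exact LinearMap.rank_le_of_injective _ hinj

end Transfer

end Aux

/-- Let `Γ` be a finitely generated group.  Then the following are
equivalent:
(i) for every normal subgroup `N` of `Γ` such that `Γ/N` contains a finitely generated
abelian subgroup of finite index, the quotient `Γ/N` is virtually cyclic;
(ii) for every subgroup `Γ₀ ⊆ Γ` of finite index, the torsion-free rank of the
abelianization of `Γ₀` (i.e. `dim_ℚ (Γ₀^{ab} ⊗_ℤ ℚ)`) is at most `1`. -/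
theorem irreducible_iff_rank_le_one
    (Γ : Type) [Group Γ] (hΓ : Group.FG Γ) :
    (∀ (N : Subgroup Γ) [N.Normal],
        (∃ B : Subgroup (Γ ⧸ N),
            (∀ x ∈ B, ∀ y ∈ B, x * y = y * x) ∧ Group.FG B ∧ B.FiniteIndex) →
        ∃ C : Subgroup (Γ ⧸ N), IsCyclic C ∧ C.FiniteIndex)
      ↔
    (∀ Γ₀ : Subgroup Γ, Γ₀.FiniteIndex →
        Module.rank ℚ (ℚ ⊗[ℤ] Additive (Abelianization Γ₀)) ≤ 1) := by
  constructor
  · -- (i) → (ii)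
    intro hi Γ₀ hΓ₀
    haveI := hΓ₀
    set Γ₁ := Γ₀.normalCore with hΓ₁def
    haveI : Γ₁.Normal := Subgroup.normalCore_normal Γ₀
    haveI : Γ₁.FiniteIndex := hΓ₁def ▸ Subgroup.finiteIndex_normalCore Γ₀
    have hle : Γ₁ ≤ Γ₀ := Subgroup.normalCore_le Γ₀
    set N : Subgroup Γ := ⁅Γ₁, Γ₁⁆ with hNdef
    haveI : N.Normal := Subgroup.commutator_normal Γ₁ Γ₁
    have hNle : N ≤ Γ₁ := Subgroup.commutator_le_left Γ₁ Γ₁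
    set π := QuotientGroup.mk' N with hπdef
    have hπ : Function.Surjective π := QuotientGroup.mk'_surjective N
    haveI : Group.FG ↥Γ₁ := Subgroup.fg_of_index_ne_zero Γ₁
    have hmapcomm : Subgroup.map Γ₁.subtype (commutator ↥Γ₁) = N := by
      rw [commutator_def, Subgroup.map_commutator, ← MonoidHom.range_eq_map,
        Subgroup.range_subtype]
    -- apply (i) to N
    have hyp : ∃ B : Subgroup (Γ ⧸ N),
        (∀ x ∈ B, ∀ y ∈ B, x * y = y * x) ∧ Group.FG B ∧ B.FiniteIndex := by
      refine ⟨Γ₁.map π, ?_, ?_, ?_⟩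
      · rintro x ⟨a, ha, rfl⟩ y ⟨b, hb, rfl⟩
        rw [← commutatorElement_eq_one_iff_mul_comm, ← map_commutatorElement]
        exact (QuotientGroup.eq_one_iff _).mpr
          (Subgroup.commutator_mem_commutator ha hb)
      · exact Group.fg_of_surjective (π.subgroupMap_surjective Γ₁)
      · constructor
        have : (Γ₁.map π).comap π = Γ₁ := by
          rw [Subgroup.comap_map_eq, QuotientGroup.ker_mk', sup_of_le_left hNle]
        rw [← Subgroup.index_comap_of_surjective _ hπ, this]
        exact Subgroup.FiniteIndex.index_ne_zero
    obtain ⟨C, hC, hCi⟩ := hi N hyp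
    · -- now the transfer argument
      have key1 : Module.rank ℚ (ℚ ⊗[ℤ] Additive (Abelianization ↥Γ₀)) ≤
          Module.rank ℚ (ℚ ⊗[ℤ] Additive (Abelianization ↥Γ₁)) := by
        haveI : (Γ₁.subgroupOf Γ₀).FiniteIndex := inferInstance
        calc Module.rank ℚ (ℚ ⊗[ℤ] Additive (Abelianization ↥Γ₀)) ≤
            Module.rank ℚ (ℚ ⊗[ℤ] Additive (Abelianization ↥(Γ₁.subgroupOf Γ₀))) :=
              rank_ab_le_of_finiteIndex (Γ₁.subgroupOf Γ₀)
          _ = Module.rank ℚ (ℚ ⊗[ℤ] Additive (Abelianization ↥Γ₁)) :=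
              rank_eq_of_mulEquiv
                (MulEquiv.abelianizationCongr (Subgroup.subgroupOfEquivOfLe hle))
      refine key1.trans ?_
      -- build the injection `Abelianization Γ₁ →* Γ ⧸ N`
      let ψ : ↥Γ₁ →* Γ ⧸ N := π.comp Γ₁.subtype
      have hψker : commutator ↥Γ₁ ≤ ψ.ker := by
        intro x hx
        have hxN : (x : Γ) ∈ N := hmapcomm ▸ Subgroup.mem_map_of_mem _ hx
        exact (QuotientGroup.eq_one_iff _).mpr hxN
      let j : Abelianization ↥Γ₁ →* Γ ⧸ N := QuotientGroup.lift (commutator ↥Γ₁) ψ hψker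
      have hofsurj : Function.Surjective (Abelianization.of (G := ↥Γ₁)) :=
        fun b => QuotientGroup.induction_on b fun z => ⟨z, rfl⟩
      have hjinj : Function.Injective j := by
        rw [injective_iff_map_eq_one]
        intro a ha
        obtain ⟨x, rfl⟩ := hofsurj a
        have hxN : (x : Γ) ∈ N := (QuotientGroup.eq_one_iff _).mp ha
        rw [← hmapcomm] at hxN
        obtain ⟨y, hy, hyx⟩ := hxN
        have hyx' : y = x := Subtype.ext hyx
        exact (QuotientGroup.eq_one_iff _).mpr (hyx' ▸ hy)
      exact rank_le_one_of_inj j hjinj C hC hCi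
  · -- (ii) → (i)
    rintro hii N _ ⟨B, hBcomm, hBfg, hBi⟩
    set π := QuotientGroup.mk' N with hπdef
    have hπ : Function.Surjective π := QuotientGroup.mk'_surjective N
    letI : CommGroup ↥B :=
      { (inferInstance : Group ↥B) with
        mul_comm := fun a b => Subtype.ext (hBcomm a.1 a.2 b.1 b.2) }
    set Γ₀ := B.comap π with hΓ₀def
    haveI hΓ₀i : Γ₀.FiniteIndex := by
      constructor
      rw [Subgroup.index_comap_of_surjective _ hπ]
      exact hBi.index_ne_zero
    have hr := hii Γ₀ hΓ₀i
    -- surjection from the abelianization of Γ₀ onto B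
    let ψ : ↥Γ₀ →* ↥B := (π.comp Γ₀.subtype).codRestrict B (fun x => x.2)
    have hψ : Function.Surjective ψ := by
      intro b
      obtain ⟨g, hg⟩ := hπ b.1
      exact ⟨⟨g, show π g ∈ B from hg ▸ b.2⟩, Subtype.ext hg⟩
    let σ : Abelianization ↥Γ₀ →* ↥B := Abelianization.lift ψ
    have hσ : Function.Surjective σ := by
      intro b
      obtain ⟨x, hx⟩ := hψ b
      exact ⟨Abelianization.of x, hx⟩
    have hrB : Module.rank ℚ (ℚ ⊗[ℤ] Additive ↥B) ≤ 1 :=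
      le_trans (rank_le_of_mul_surj σ hσ) hr
    obtain ⟨D, hD, hDi⟩ := exists_cyclic hBfg hrB
    refine ⟨D.map B.subtype, ?_, ?_⟩
    · haveI := hD
      exact isCyclic_of_surjective _ (D.equivMapOfInjective B.subtype
        B.subtype_injective).surjective
    · have h1 : D.map B.subtype ≤ B := Subgroup.map_subtype_le D
      constructor
      rw [← Subgroup.relIndex_mul_index h1]
      apply mul_ne_zero
      · show ((D.map B.subtype).subgroupOf B).index ≠ 0
        rw [Subgroup.subgroupOf, Subgroup.comap_map_eq_self_of_injective
          B.subtype_injective]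
        exact hDi.index_ne_zero
      · exact hBi.index_ne_zero
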